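/- The generating function identity Σ_{π : shape(π) ⊆ ρ} t^{cor(π)} = (1−t)^{−|ρ|} holds for a fixed finite shape ρ, where the sum is over d-dimensional partitions with shape contained in ρ. -/

import Mathlib

open scoped BigOperators

noncomputable section

namespace HDP

variable {d : ℕ}

/-- The step `i → i + e_ℓ` in `ℤ₊^d` (coordinates are 0-based). -/
def step (i : Fin d → ℕ) (ℓ : Fin d) : Fin d → ℕ := Function.update i ℓ (i ℓ + 1)

/-- `p` is a directed lattice path of length `n` starting at `i`:
each step goes from a point to the point plus a standard basis vector. -/
def IsPathFrom (i : Fin d → ℕ) (n : ℕ) (p : ℕ → Fin d → ℕ) : Prop :=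
  p 0 = i ∧ ∀ t < n, ∃ ℓ, p (t + 1) = step (p t) ℓ

/-- The last passage time `G(i)`: the maximum, over directed lattice paths starting
at `i`, of the sum of the entries of `A` along the path. -/
def lpt (A : (Fin d → ℕ) → ℕ) (i : Fin d → ℕ) : ℕ :=
  sSup {s | ∃ n p, IsPathFrom i n p ∧ s = ∑ t ∈ Finset.range (n + 1), A (p t)}

/-- A `d`-dimensional partition: a finitely supported function `ℤ₊^d → ℕ`
which is weakly decreasing in each coordinate. -/
def IsPartition (π : (Fin d → ℕ) → ℕ) : Prop :=
  (Function.support π).Finite ∧ ∀ i j : Fin d → ℕ, (∀ k, i k ≤ j k) → π j ≤ π i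

/-- The set of corners of a `d`-dimensional partition `π` : points `(i, k)` of the
diagram of `π` (i.e. `1 ≤ k ≤ π i`) such that `(i + e ℓ, k)` is not in the diagram
for every `ℓ ∈ [d]`. -/
def Cor (π : (Fin d → ℕ) → ℕ) : Set ((Fin d → ℕ) × ℕ) :=
  {p | 1 ≤ p.2 ∧ p.2 ≤ π p.1 ∧ ∀ ℓ, π (step p.1 ℓ) < p.2}

/-- The number of corners of `π`. -/
def cor (π : (Fin d → ℕ) → ℕ) : ℕ := Nat.card (Cor π)

/-- The corner-hook volume of `π`: the sum over corners `(i, k)` of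
`i₁ + ⋯ + i_d - d + 1` (in 1-based coordinates; with our 0-based
coordinates this cohook length is `(∑ j, i j) + 1`). -/
def chvol (π : (Fin d → ℕ) → ℕ) : ℕ := ∑ᶠ p ∈ Cor π, ((∑ j, p.1 j) + 1)

/-- A set is down-closed for the componentwise order. -/
def DownClosed (ρ : Set (Fin d → ℕ)) : Prop :=
  ∀ i j : Fin d → ℕ, (∀ k, i k ≤ j k) → j ∈ ρ → i ∈ ρ

/-- The set of top corners of a shape `ρ`. -/
def Cr (ρ : Set (Fin d → ℕ)) : Set (Fin d → ℕ) := {i ∈ ρ | ∀ ℓ, step i ℓ ∉ ρ}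

end HDP

open HDP

/-- The product topology on formal power series (coefficientwise convergence). -/
instance powerSeriesTopology : TopologicalSpace (PowerSeries ℚ) :=
  inferInstanceAs (TopologicalSpace ((Unit →₀ ℕ) → ℚ))


namespace HDPaux
variable {d : ℕ}

lemma le_step (i : Fin d → ℕ) (ℓ k : Fin d) : i k ≤ step i ℓ k := by
  rcases eq_or_ne k ℓ with rfl | h
  · simp [step]
  · simp [step, Function.update_apply, h]

lemma sum_step (i : Fin d → ℕ) (ℓ : Fin d) : ∑ j, step i ℓ j = (∑ j, i j) + 1 := by
  unfold step
  rw [Finset.sum_update_of_mem (Finset.mem_univ ℓ)]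
  have : ∑ j, i j = i ℓ + ∑ j ∈ Finset.univ \ {ℓ}, i j := by
    rw [← Finset.sum_insert (by simp)]
    congr 1
    ext x
    simp [eq_comm, or_comm, em]
  omega

lemma mono_of_step (f : (Fin d → ℕ) → ℕ) (hf : ∀ i ℓ, f (step i ℓ) ≤ f i) :
    ∀ i j : Fin d → ℕ, (∀ k, i k ≤ j k) → f j ≤ f i := by
  suffices H : ∀ n (i j : Fin d → ℕ), (∀ k, i k ≤ j k) → (∑ k, (j k - i k)) = n → f j ≤ f i by
    intro i j hij; exact H _ i j hij rfl
  intro n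
  induction n with
  | zero =>
    intro i j hij hsum
    have : ∀ k, j k = i k := by
      intro k
      have := Finset.sum_eq_zero_iff.mp hsum k (Finset.mem_univ k)
      have := hij k
      omega
    rw [funext this]
  | succ n ih =>
    intro i j hij hsum
    have hne : ∃ ℓ, i ℓ < j ℓ := by
      by_contra h
      push_neg at h
      have : ∀ k ∈ Finset.univ, j k - i k = 0 := fun k _ => by have := h k; omega
      rw [Finset.sum_eq_zero this] at hsum
      omega
    obtain ⟨ℓ, hℓ⟩ := hne
    set j' := Function.update j ℓ (j ℓ - 1) with hj'
    have hsj : step j' ℓ = j := by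
      unfold step
      rw [hj']
      funext k
      rcases eq_or_ne k ℓ with rfl | h
      · simp [Function.update_self]; omega
      · simp [Function.update_apply, h]
    have hij' : ∀ k, i k ≤ j' k := by
      intro k
      rcases eq_or_ne k ℓ with rfl | h
      · simp [hj', Function.update_self]; omega
      · simp [hj', Function.update_apply, h]; exact hij k
    have hsum' : ∑ k, (j' k - i k) = n := by
      have hfun : (fun k => j' k - i k) = Function.update (fun k => j k - i k) ℓ (j ℓ - 1 - i ℓ) := by
        funext k
        rcases eq_or_ne k ℓ with rfl | h
        · simp [hj', Function.update_self]
        · simp [hj', Function.update_apply, h]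
      rw [hfun, Finset.sum_update_of_mem (Finset.mem_univ ℓ)]
      have h2 : ∑ k, (j k - i k) = (j ℓ - i ℓ) + ∑ k ∈ Finset.univ \ {ℓ}, (j k - i k) := by
        rw [Finset.sdiff_singleton_eq_erase]
        exact (Finset.add_sum_erase Finset.univ (fun k => j k - i k) (Finset.mem_univ ℓ)).symm
      omega
    calc f j = f (step j' ℓ) := by rw [hsj]
    _ ≤ f j' := hf j' ℓ
    _ ≤ f i := ih i j' hij' hsum'

variable (ρ : Set (Fin d → ℕ))

/-- max of π over the neighbors `i + e ℓ`. -/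
def M (π : (Fin d → ℕ) → ℕ) (i : Fin d → ℕ) : ℕ := Finset.univ.sup fun ℓ => π (step i ℓ)

attribute [local instance] Classical.propDecidable

/-- fuelled recursion for the inverse bijection -/
noncomputable def g (A : (Fin d → ℕ) → ℕ) : ℕ → (Fin d → ℕ) → ℕ
  | 0, _ => 0
  | m+1, i => if i ∈ ρ then A i + Finset.univ.sup (fun ℓ => g A m (step i ℓ)) else 0

noncomputable def bound (hfin : ρ.Finite) : ℕ := (hfin.toFinset.sup fun i => ∑ j, i j) + 1

noncomputable def build (hfin : ρ.Finite) (A : (Fin d → ℕ) → ℕ) (i : Fin d → ℕ) : ℕ :=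
  g ρ A (bound ρ hfin - ∑ j, i j) i

lemma g_succ (A : (Fin d → ℕ) → ℕ) (m : ℕ) (i : Fin d → ℕ) :
    g ρ A (m+1) i = if i ∈ ρ then A i + Finset.univ.sup (fun ℓ => g ρ A m (step i ℓ)) else 0 :=
  rfl

variable {ρ} (hfin : ρ.Finite) (A : (Fin d → ℕ) → ℕ)

lemma g_not_mem (m : ℕ) (i : Fin d → ℕ) (h : i ∉ ρ) : g ρ A m i = 0 := by
  cases m with
  | zero => rfl
  | succ m => rw [g_succ, if_neg h]

lemma build_not_mem (i : Fin d → ℕ) (h : i ∉ ρ) : build ρ hfin A i = 0 :=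
  g_not_mem A _ i h

lemma sum_lt_bound (i : Fin d → ℕ) (h : i ∈ ρ) : ∑ j, i j < bound ρ hfin := by
  have h2 : ∑ j, i j ≤ hfin.toFinset.sup fun i => ∑ j, i j := by
    apply Finset.le_sup (hfin.mem_toFinset.mpr h)
  exact Nat.lt_succ_of_le h2

lemma build_mem (i : Fin d → ℕ) (h : i ∈ ρ) :
    build ρ hfin A i = A i + Finset.univ.sup (fun ℓ => build ρ hfin A (step i ℓ)) := by
  have hb := sum_lt_bound hfin i h
  have h1 : bound ρ hfin - ∑ j, i j = (bound ρ hfin - ∑ j, i j - 1) + 1 := by omega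
  unfold build
  rw [h1, g_succ, if_pos h]
  congr 1
  apply Finset.sup_congr rfl
  intro ℓ _
  show g ρ A _ _ = g ρ A (bound ρ hfin - ∑ j, step i ℓ j) _
  rw [sum_step, Nat.sub_add_eq]

lemma build_step_le (hdown : DownClosed ρ) (i : Fin d → ℕ) (ℓ : Fin d) :
    build ρ hfin A (step i ℓ) ≤ build ρ hfin A i := by
  by_cases h : i ∈ ρ
  · rw [build_mem hfin A i h]
    exact le_trans (Finset.le_sup (f := fun ℓ => build ρ hfin A (step i ℓ)) (Finset.mem_univ ℓ))
      (Nat.le_add_left _ _)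
  · have hstep : step i ℓ ∉ ρ := fun hmem => h (hdown i (step i ℓ) (le_step i ℓ) hmem)
    rw [build_not_mem hfin A _ hstep, build_not_mem hfin A _ h]

lemma build_isPartition (hdown : DownClosed ρ) : IsPartition (build ρ hfin A) ∧
    Function.support (build ρ hfin A) ⊆ ρ := by
  have hsupp : Function.support (build ρ hfin A) ⊆ ρ := by
    intro i hi
    by_contra h
    exact hi (build_not_mem hfin A i h)
  exact ⟨⟨hfin.subset hsupp,
    mono_of_step _ (build_step_le hfin A hdown)⟩, hsupp⟩

/-- the forward map -/
def toA (π : (Fin d → ℕ) → ℕ) (i : Fin d → ℕ) : ℕ := π i - M π i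

lemma M_le {π : (Fin d → ℕ) → ℕ} (hπ : IsPartition π) (i : Fin d → ℕ) : M π i ≤ π i :=
  Finset.sup_le fun ℓ _ => hπ.2 i (step i ℓ) (le_step i ℓ)

lemma toA_build (hA : Function.support A ⊆ ρ) : toA (build ρ hfin A) = A := by
  funext i
  by_cases h : i ∈ ρ
  · unfold toA M
    rw [build_mem hfin A i h]
    omega
  · have hA0 : A i = 0 := by
      by_contra h0
      exact h (hA h0)
    unfold toA
    rw [build_not_mem hfin A i h, hA0]
    omega

lemma build_toA {π : (Fin d → ℕ) → ℕ} (hπ : IsPartition π)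
    (hsupp : Function.support π ⊆ ρ) : build ρ hfin (toA π) = π := by
  suffices H : ∀ n (i : Fin d → ℕ), bound ρ hfin - ∑ j, i j ≤ n → build ρ hfin (toA π) i = π i by
    funext i; exact H _ i le_rfl
  intro n
  induction n with
  | zero =>
    intro i hn
    have h : i ∉ ρ := by
      intro hmem
      have := sum_lt_bound hfin i hmem
      omega
    rw [build_not_mem hfin _ i h]
    by_contra h0
    exact h (hsupp fun hc => h0 hc.symm)
  | succ n ih =>
    intro i hn
    by_cases h : i ∈ ρ
    · have hb := sum_lt_bound hfin i h
      rw [build_mem hfin _ i h]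
      have hsup : (Finset.univ.sup fun ℓ => build ρ hfin (toA π) (step i ℓ)) = M π i := by
        apply Finset.sup_congr rfl
        intro ℓ _
        apply ih
        rw [sum_step]
        omega
      rw [hsup]
      unfold toA
      exact Nat.sub_add_cancel (M_le hπ i)
    · rw [build_not_mem hfin _ i h]
      by_contra h0
      exact h (hsupp fun hc => h0 hc.symm)

lemma cor_eq_sum {π : (Fin d → ℕ) → ℕ} (hπ : IsPartition π)
    (hsupp : Function.support π ⊆ ρ) :
    cor π = ∑ i ∈ hfin.toFinset, (π i - M π i) := by
  classical
  set T : Finset ((Fin d → ℕ) × ℕ) :=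
    hfin.toFinset.biUnion (fun i => (Finset.Ioc (M π i) (π i)).image fun k => (i, k)) with hT
  have hset : Cor π = ↑T := by
    ext p
    obtain ⟨i, k⟩ := p
    simp only [Cor, Set.mem_setOf_eq, hT, Finset.coe_biUnion, Set.mem_iUnion,
      Finset.mem_coe, Finset.mem_image, Finset.mem_Ioc, hfin.mem_toFinset,
      Finset.mem_biUnion]
    constructor
    · rintro ⟨h1, h2, h3⟩
      have hiρ : i ∈ ρ := hsupp (by simp only [Function.mem_support]; omega)
      refine ⟨i, hiρ, k, ⟨?_, h2⟩, rfl⟩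
      exact (Finset.sup_lt_iff (show (⊥:ℕ) < k from h1)).mpr fun ℓ _ => h3 ℓ
    · rintro ⟨i', hi', k', ⟨hm, hk⟩, heq⟩
      obtain ⟨rfl, rfl⟩ : i' = i ∧ k' = k := Prod.mk.injEq i' k' i k ▸ heq
      refine ⟨by omega, hk, fun ℓ => ?_⟩
      exact lt_of_le_of_lt (Finset.le_sup (f := fun ℓ => π (step i' ℓ)) (Finset.mem_univ ℓ)) hm
  rw [cor, hset, Nat.card_coe_set_eq, Set.ncard_coe_finset, hT]
  rw [Finset.card_biUnion]
  · apply Finset.sum_congr rfl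
    intro i _
    rw [Finset.card_image_of_injective _ (fun a b hab => (Prod.mk.injEq .. ▸ hab).2),
      Nat.card_Ioc]
  · intro i1 _ i2 _ hne
    simp only [Finset.disjoint_left, Finset.mem_image]
    rintro p ⟨k1, _, rfl⟩ ⟨k2, _, h2⟩
    exact hne (congrArg Prod.fst h2).symm

noncomputable def ext' (B : ↥(hfin.toFinset) → ℕ) : (Fin d → ℕ) → ℕ :=
  fun i => if h : i ∈ hfin.toFinset then B ⟨i, h⟩ else 0

lemma ext'_supp (B : ↥(hfin.toFinset) → ℕ) : Function.support (ext' hfin B) ⊆ ρ := by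
  intro i hi
  by_contra h
  apply hi
  unfold ext'
  rw [dif_neg (fun hc => h (hfin.mem_toFinset.mp hc))]

noncomputable def E (hdown : DownClosed ρ) :
    (↥(hfin.toFinset) → ℕ) ≃ {π : (Fin d → ℕ) → ℕ // IsPartition π ∧ Function.support π ⊆ ρ} where
  toFun B := ⟨build ρ hfin (ext' hfin B), (build_isPartition hfin _ hdown).1,
    (build_isPartition hfin _ hdown).2⟩
  invFun π := fun i => toA π.1 i.1
  left_inv B := by
    funext i
    have hx := toA_build hfin (ext' hfin B) (ext'_supp hfin B)
    show toA (build ρ hfin (ext' hfin B)) i.1 = B i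
    rw [hx]
    unfold ext'
    rw [dif_pos i.2]
  right_inv π := by
    apply Subtype.ext
    show build ρ hfin (ext' hfin (fun i => toA π.1 i.1)) = π.1
    have hfun : ext' hfin (fun i => toA π.1 i.1) = toA π.1 := by
      funext i
      unfold ext'
      by_cases h : i ∈ hfin.toFinset
      · rw [dif_pos h]
      · rw [dif_neg h]
        have hρ : i ∉ ρ := fun hc => h (hfin.mem_toFinset.mpr hc)
        have hπ0 : π.1 i = 0 := by
          by_contra h0
          exact hρ (π.2.2 h0)
        show (0:ℕ) = toA π.1 i
        unfold toA
        rw [hπ0]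
        omega
    rw [hfun]
    exact build_toA hfin π.2.1 π.2.2

lemma cor_E (hdown : DownClosed ρ) (B : ↥(hfin.toFinset) → ℕ) :
    cor (build ρ hfin (ext' hfin B)) = ∑ i : ↥(hfin.toFinset), B i := by
  rw [cor_eq_sum hfin (build_isPartition hfin _ hdown).1 (build_isPartition hfin _ hdown).2]
  have h1 : ∀ i ∈ hfin.toFinset,
      build ρ hfin (ext' hfin B) i - M (build ρ hfin (ext' hfin B)) i = ext' hfin B i := by
    intro i _
    exact congrFun (toA_build hfin (ext' hfin B) (ext'_supp hfin B)) i
  rw [Finset.sum_congr rfl h1]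
  rw [← Finset.sum_attach (hfin.toFinset) (fun i => ext' hfin B i)]
  rw [Finset.univ_eq_attach]
  apply Finset.sum_congr rfl
  intro x _
  unfold ext'
  rw [dif_pos x.2]

end HDPaux

namespace HDPaux

open PowerSeries

lemma card_adT_succ (N n : ℕ) :
    (Finset.Nat.antidiagonalTuple (N+1) n).card
      = ∑ p ∈ Finset.HasAntidiagonal.antidiagonal n, (Finset.Nat.antidiagonalTuple N p.2).card := by
  rw [← Finset.card_sigma]
  apply Finset.card_bij' (fun x _ => ⟨(x 0, ∑ i, Fin.tail x i), Fin.tail x⟩)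
    (fun y _ => Fin.cons y.1.1 y.2)
  · intro x _; exact Fin.cons_self_tail x
  · intro y hy
    rw [Finset.mem_sigma, Finset.HasAntidiagonal.mem_antidiagonal, Finset.Nat.mem_antidiagonalTuple] at hy
    refine Sigma.ext ?_ ?_
    · simp [Fin.tail_cons, hy.2]
    · simp [Fin.tail_cons]
  · intro x hx
    rw [Finset.Nat.mem_antidiagonalTuple] at hx
    refine Finset.mem_sigma.mpr ⟨?_, ?_⟩
    · rw [Finset.HasAntidiagonal.mem_antidiagonal]
      rw [← hx, Fin.sum_univ_succ]; rfl
    · exact Finset.Nat.mem_antidiagonalTuple.mpr rfl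
  · intro y hy
    rw [Finset.mem_sigma, Finset.HasAntidiagonal.mem_antidiagonal, Finset.Nat.mem_antidiagonalTuple] at hy
    rw [Finset.Nat.mem_antidiagonalTuple, Fin.sum_cons, hy.2, hy.1]

lemma coeff_mk_one_pow (N n : ℕ) :
    PowerSeries.coeff n ((PowerSeries.mk 1 : PowerSeries ℚ)^N)
      = (Finset.Nat.antidiagonalTuple N n).card := by
  induction N generalizing n with
  | zero =>
    cases n with
    | zero => simp
    | succ n => simp [PowerSeries.coeff_one]
  | succ N ih =>
    rw [pow_succ, mul_comm, PowerSeries.coeff_mul, card_adT_succ]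
    push_cast
    refine Finset.sum_congr rfl fun p hp => ?_
    rw [PowerSeries.coeff_mk, Pi.one_apply, one_mul, ih]

lemma hasSum_coeff_pow (N n : ℕ) :
    HasSum (fun A : Fin N → ℕ => PowerSeries.coeff n ((X : PowerSeries ℚ)^(∑ i, A i)))
      (PowerSeries.coeff n ((PowerSeries.mk 1 : PowerSeries ℚ)^N)) := by
  rw [coeff_mk_one_pow]
  have h0 : ∀ A ∉ Finset.Nat.antidiagonalTuple N n,
      PowerSeries.coeff n ((X : PowerSeries ℚ)^(∑ i, A i)) = 0 := by
    intro A hA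
    rw [Finset.Nat.mem_antidiagonalTuple] at hA
    rw [PowerSeries.coeff_X_pow, if_neg (fun h => hA h.symm)]
  have h := hasSum_sum_of_ne_finset_zero (L := SummationFilter.unconditional _) h0
  have hs : ∑ A ∈ Finset.Nat.antidiagonalTuple N n,
      PowerSeries.coeff n ((X : PowerSeries ℚ)^(∑ i, A i))
      = ((Finset.Nat.antidiagonalTuple N n).card : ℚ) := by
    rw [Finset.sum_congr rfl (fun A hA => ?_), Finset.sum_const, nsmul_eq_mul, mul_one]
    rw [PowerSeries.coeff_X_pow,
      if_pos (Finset.Nat.mem_antidiagonalTuple.mp hA).symm]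
  rwa [hs] at h

lemma hasSum_X_pow_sum (N : ℕ) :
    HasSum (fun A : Fin N → ℕ => (X : PowerSeries ℚ)^(∑ i, A i))
      ((PowerSeries.mk 1 : PowerSeries ℚ)^N) := by
  apply Pi.hasSum.mpr
  intro j
  have hj : j = Finsupp.single () (j ()) := (Finsupp.unique_single j).trans rfl
  rw [hj]
  exact hasSum_coeff_pow N (j ())

lemma tsum_X_pow_sum (N : ℕ) :
    ∑' A : Fin N → ℕ, (X : PowerSeries ℚ)^(∑ i, A i)
      = ((1 - (X : PowerSeries ℚ))⁻¹)^N := by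
  haveI : T2Space (PowerSeries ℚ) := inferInstanceAs (T2Space ((Unit →₀ ℕ) → ℚ))
  have hinv : (1 - (X : PowerSeries ℚ))⁻¹ = PowerSeries.mk 1 := by
    rw [PowerSeries.inv_eq_iff_mul_eq_one]
    · exact PowerSeries.mk_one_mul_one_sub_eq_one ℚ
    · simp
  rw [hinv]
  exact (hasSum_X_pow_sum N).tsum_eq

end HDPaux

/-- `Σ_{sh(π) ⊆ ρ} t^{cor π} = (1 - t)^{-|ρ|}`. -/
theorem corner_generating_function_q_one {d : ℕ} (ρ : Set (Fin d → ℕ))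
    (hfin : ρ.Finite) (hdown : DownClosed ρ) :
    ∑' π : {π : (Fin d → ℕ) → ℕ // IsPartition π ∧ Function.support π ⊆ ρ},
        (PowerSeries.X : PowerSeries ℚ) ^ cor π.1
      = ((1 - (PowerSeries.X : PowerSeries ℚ))⁻¹) ^ (Nat.card ρ) := by
  classical
  set s := hfin.toFinset with hs
  set N := Fintype.card ↥s with hN
  have hcard : Nat.card ρ = N := by
    rw [← hfin.coe_toFinset, Nat.card_coe_set_eq, Set.ncard_coe_finset]
    exact (Fintype.card_coe s).symm
  set e3 : (Fin N → ℕ) ≃ (↥s → ℕ) :=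
    Equiv.arrowCongr (Fintype.equivFin ↥s).symm (Equiv.refl ℕ) with he3
  set F : (Fin N → ℕ) ≃ {π : (Fin d → ℕ) → ℕ // IsPartition π ∧ Function.support π ⊆ ρ} :=
    e3.trans (HDPaux.E hfin hdown) with hF
  rw [← Equiv.tsum_eq F (fun π : {π : (Fin d → ℕ) → ℕ // IsPartition π ∧ Function.support π ⊆ ρ}
      => (PowerSeries.X : PowerSeries ℚ) ^ cor π.1)]
  have hterm : ∀ C : Fin N → ℕ,
      (PowerSeries.X : PowerSeries ℚ) ^ cor ((F C) : {π : (Fin d → ℕ) → ℕ //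
        IsPartition π ∧ Function.support π ⊆ ρ}).1
      = (PowerSeries.X : PowerSeries ℚ) ^ (∑ x, C x) := by
    intro C
    congr 1
    show cor (HDPaux.build ρ hfin (HDPaux.ext' hfin (e3 C))) = _
    rw [HDPaux.cor_E hfin hdown (e3 C)]
    exact Fintype.sum_equiv (Fintype.equivFin ↥s) _ _ (fun i => rfl)
  rw [tsum_congr hterm, HDPaux.tsum_X_pow_sum N, hcard]
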